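/- Let P be an ideal projector on F[x₁,…,x_d] whose kernel has a Gröbner basis G = {g₁,…,g_m} with g_j = x^{α^{(j)}} − Σ_{0 ≤ β < α^{(j)}} c_{j,β} x^β, and whose range is the span of the monomials x^β not divisible by any x^{α^{(j)}}. Then for every exponent γ ∈ ℕ^d, the polynomial x^γ − P(x^γ) lies in the ideal generated by those g_j with α^{(j)} ≤ γ (componentwise). In particular there exist polynomials A_{γ,j} with x^γ − P(x^γ) = Σ_j A_{γ,j} g_j where A_{γ,j} = 0 whenever x^{α^{(j)}} does not divide x^γ. -/

import Mathlib

open MvPolynomial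

/-- `g` has the form `x^α - ∑_{β < α} c_β x^β` with all `β` strictly below `α` componentwise. -/
def HasLowerForm {F : Type*} [Field F] {d : ℕ} (g : MvPolynomial (Fin d) F)
    (α : Fin d →₀ ℕ) : Prop :=
  ∃ (s : Finset (Fin d →₀ ℕ)) (c : (Fin d →₀ ℕ) → F),
    (∀ β ∈ s, β ≤ α ∧ β ≠ α) ∧ g = monomial α 1 - ∑ β ∈ s, monomial β (c β)

/-- `δ` is the leading exponent (exponent of the leading monomial) of `p` w.r.t. `m`. -/
def IsLeadExp {F : Type*} [Field F] {d : ℕ} (m : MonomialOrder (Fin d))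
    (p : MvPolynomial (Fin d) F) (δ : Fin d →₀ ℕ) : Prop :=
  δ ∈ p.support ∧ ∀ β ∈ p.support, m.toSyn β ≤ m.toSyn δ

/-- `G` is a Gröbner basis of `I` w.r.t. the monomial order `m`. -/
def IsGB {F : Type*} [Field F] {d : ℕ} (m : MonomialOrder (Fin d))
    (I : Ideal (MvPolynomial (Fin d) F)) (G : Set (MvPolynomial (Fin d) F)) : Prop :=
  G ⊆ (I : Set (MvPolynomial (Fin d) F)) ∧
    ∀ p ∈ I, p ≠ 0 → ∃ g ∈ G, ∃ δg δp, IsLeadExp m g δg ∧ IsLeadExp m p δp ∧ δg ≤ δp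

/-- `G` is a reduced Gröbner basis of `I` w.r.t. `m`: a Gröbner basis of monic elements,
no term of any element being divisible by the leading monomial of another element. -/
def IsReducedGB {F : Type*} [Field F] {d : ℕ} (m : MonomialOrder (Fin d))
    (I : Ideal (MvPolynomial (Fin d) F)) (G : Set (MvPolynomial (Fin d) F)) : Prop :=
  IsGB m I G ∧ ∀ g ∈ G, ∃ δ, IsLeadExp m g δ ∧ coeff δ g = 1 ∧
    ∀ g' ∈ G, g' ≠ g → ∀ β ∈ g.support, ∀ δ', IsLeadExp m g' δ' → ¬ δ' ≤ β

/-- The Gröbner éscalier associated to a (reduced) Gröbner basis `G`: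
exponents of the monomials not divisible by any leading monomial of `G`. -/
def escalier {F : Type*} [Field F] {d : ℕ} (m : MonomialOrder (Fin d))
    (G : Set (MvPolynomial (Fin d) F)) : Set (Fin d →₀ ℕ) :=
  {β | ∀ g ∈ G, ∀ δ, IsLeadExp m g δ → ¬ δ ≤ β}

/-- `α! = α₁!⋯α_d!`. -/
def nfact {d : ℕ} (α : Fin d →₀ ℕ) : ℕ := α.prod fun _ k => k.factorial

/-- The differential operator `D^α = ∂^{α₁}/∂x₁^{α₁} ⋯ ∂^{α_d}/∂x_d^{α_d}`. -/
noncomputable def Dpow (F : Type*) [Field F] {d : ℕ} (α : Fin d →₀ ℕ) :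
    Module.End F (MvPolynomial (Fin d) F) :=
  (List.ofFn fun i : Fin d =>
    ((MvPolynomial.pderiv i).toLinearMap : Module.End F (MvPolynomial (Fin d) F)) ^ α i).prod

/-- For an ideal projector `P` whose kernel has the Gröbner basis `{g_j}` with
`g_j = x^{α_j} - (lower terms)` and whose range is the span of the monomials not
divisible by any `x^{α_j}`: for every `γ`, `x^γ - P(x^γ)` lies in the ideal generated
by those `g_j` with `α_j ≤ γ`; in particular `x^γ - P(x^γ) = ∑ A_{γ,j} g_j` with
`A_{γ,j} = 0` whenever `x^{α_j} ∤ x^γ`. -/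
theorem stmt7 {F : Type*} [Field F] [CharZero F] {d M : ℕ}
    (P : MvPolynomial (Fin d) F →ₗ[F] MvPolynomial (Fin d) F) (hP : P ∘ₗ P = P)
    (I : Ideal (MvPolynomial (Fin d) F)) (hker : ∀ f, P f = 0 ↔ f ∈ I)
    (g : Fin M → MvPolynomial (Fin d) F) (α : Fin M → (Fin d →₀ ℕ))
    (hform : ∀ j, HasLowerForm (g j) (α j))
    (m₀ : MonomialOrder (Fin d)) (hGB : IsGB m₀ I (Set.range g))
    (hran : LinearMap.range P =
      Submodule.span F ((fun β => monomial β (1 : F)) '' {β | ∀ j, ¬ α j ≤ β})) :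
    ∀ γ : Fin d →₀ ℕ,
      monomial γ (1 : F) - P (monomial γ 1) ∈
        Ideal.span {p | ∃ j, α j ≤ γ ∧ p = g j} ∧
      ∃ A : Fin M → MvPolynomial (Fin d) F,
        monomial γ (1 : F) - P (monomial γ 1) = ∑ j, A j * g j ∧
          ∀ j, ¬ α j ≤ γ → A j = 0 := by
  have hPP : ∀ f, P (P f) = P f := fun f => LinearMap.congr_fun hP f
  -- degree helper
  have hdeg_lt : ∀ a b : Fin d →₀ ℕ, a ≤ b → a ≠ b →
      (a.sum fun _ k => k) < (b.sum fun _ k => k) := by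
    intro a b hab hne
    obtain ⟨δ, rfl⟩ := le_iff_exists_add.mp hab
    have hδ : δ ≠ 0 := by rintro rfl; simp at hne
    have hadd : ((a + δ).sum fun _ k => k) = (a.sum fun _ k => k) + (δ.sum fun _ k => k) :=
      Finsupp.sum_add_index' (fun _ => rfl) (fun _ _ _ => rfl)
    rcases Finsupp.ne_iff.mp hδ with ⟨i, hi⟩
    simp only [Finsupp.coe_zero, Pi.zero_apply] at hi
    have hpos : 0 < δ.sum fun _ k => k :=
      lt_of_lt_of_le (Nat.pos_of_ne_zero hi)
        (Finset.single_le_sum (f := fun i => δ i) (fun _ _ => Nat.zero_le _)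
          (Finsupp.mem_support_iff.mpr hi))
    omega
  have key : ∀ n, ∀ γ : Fin d →₀ ℕ, (γ.sum fun _ k => k) < n →
      ∃ A : Fin M → MvPolynomial (Fin d) F,
        monomial γ (1 : F) - P (monomial γ 1) = ∑ j, A j * g j ∧
          ∀ j, ¬ α j ≤ γ → A j = 0 := by
    intro n
    induction n with
    | zero => intro γ h; omega
    | succ n ih =>
      intro γ hγ
      by_cases hcase : ∀ j, ¬ α j ≤ γ
      · refine ⟨0, ?_, fun _ _ => rfl⟩
        have hmem : monomial γ (1 : F) ∈ LinearMap.range P := by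
          rw [hran]; exact Submodule.subset_span ⟨γ, hcase, rfl⟩
        obtain ⟨f, hf⟩ := hmem
        have hfix : P (monomial γ (1 : F)) = monomial γ 1 := by rw [← hf, hPP]
        simp [hfix]
      · push_neg at hcase
        obtain ⟨j₀, hj₀⟩ := hcase
        obtain ⟨s, c, hs, hgform⟩ := hform j₀
        set q : MvPolynomial (Fin d) F := monomial (γ - α j₀) 1 with hq
        have hsub : γ - α j₀ + α j₀ = γ := tsub_add_cancel_of_le hj₀
        have hqg : q * g j₀ = monomial γ (1 : F)
            - ∑ β ∈ s, monomial (γ - α j₀ + β) (c β) := by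
          rw [hgform, mul_sub, Finset.mul_sum]
          congr 1
          · rw [hq, monomial_mul, hsub, one_mul]
          · exact Finset.sum_congr rfl fun β _ => by rw [hq, monomial_mul, one_mul]
        have hmon : monomial γ (1 : F) = q * g j₀
            + ∑ β ∈ s, c β • monomial (γ - α j₀ + β) (1 : F) := by
          rw [hqg]
          have : ∀ β ∈ s, c β • monomial (γ - α j₀ + β) (1 : F)
              = monomial (γ - α j₀ + β) (c β) := fun β _ => by
            rw [MvPolynomial.smul_monomial, smul_eq_mul, mul_one]
          rw [Finset.sum_congr rfl this]
          ring
        have hle : ∀ β ∈ s, γ - α j₀ + β ≤ γ := by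
          intro β hβ
          calc γ - α j₀ + β ≤ γ - α j₀ + α j₀ := add_le_add_right (hs β hβ).1 _
          _ = γ := hsub
        have hne : ∀ β ∈ s, γ - α j₀ + β ≠ γ := by
          intro β hβ h
          exact (hs β hβ).2 (add_left_cancel (h.trans hsub.symm))
        have ihβ : ∀ β ∈ s, ∃ A' : Fin M → MvPolynomial (Fin d) F,
            monomial (γ - α j₀ + β) (1 : F) - P (monomial (γ - α j₀ + β) 1)
              = ∑ j, A' j * g j ∧ ∀ j, ¬ α j ≤ γ - α j₀ + β → A' j = 0 := by
          intro β hβ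
          exact ih _ (by have := hdeg_lt _ _ (hle β hβ) (hne β hβ); omega)
        choose! A' hA'1 hA'2 using ihβ
        have hP0 : P (q * g j₀) = 0 :=
          (hker _).mpr (I.mul_mem_left q (hGB.1 ⟨j₀, rfl⟩))
        have hPγ : P (monomial γ (1 : F))
            = ∑ β ∈ s, c β • P (monomial (γ - α j₀ + β) (1 : F)) := by
          conv_lhs => rw [hmon]
          rw [map_add, hP0, zero_add, map_sum]
          exact Finset.sum_congr rfl fun β _ => map_smul P _ _
        refine ⟨fun j => (if j = j₀ then q else 0) + ∑ β ∈ s, c β • A' β j, ?_, ?_⟩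
        · have e1 : ∑ j, (if j = j₀ then q else 0) * g j = q * g j₀ := by
            rw [Finset.sum_eq_single j₀]
            · simp
            · intro b _ hb; simp [hb]
            · simp
          have e2 : ∀ β ∈ s, ∑ j, (c β • A' β j) * g j
              = c β • (monomial (γ - α j₀ + β) (1 : F)
                  - P (monomial (γ - α j₀ + β) 1)) := by
            intro β hβ
            rw [hA'1 β hβ, Finset.smul_sum]
            exact Finset.sum_congr rfl fun j _ => (smul_mul_assoc _ _ _)
          calc monomial γ (1 : F) - P (monomial γ 1)
              = q * g j₀ + ∑ β ∈ s, c β • (monomial (γ - α j₀ + β) (1 : F)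
                  - P (monomial (γ - α j₀ + β) 1)) := by
                rw [hPγ, hmon]
                simp only [smul_sub]
                rw [Finset.sum_sub_distrib]
                ring
            _ = ∑ j, ((if j = j₀ then q else 0) + ∑ β ∈ s, c β • A' β j) * g j := by
                simp only [add_mul, Finset.sum_add_distrib, e1, Finset.sum_mul]
                congr 1
                rw [Finset.sum_comm]
                exact (Finset.sum_congr rfl e2).symm
        · intro j hj
          have hjne : j ≠ j₀ := fun h => hj (h ▸ hj₀)
          simp only [if_neg hjne, zero_add]
          refine Finset.sum_eq_zero fun β hβ => ?_
          rw [hA'2 β hβ j (fun h => hj (h.trans (hle β hβ))), smul_zero]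
  intro γ
  obtain ⟨A, hA1, hA2⟩ := key ((γ.sum fun _ k => k) + 1) γ (Nat.lt_succ_self _)
  constructor
  · rw [hA1]
    refine Ideal.sum_mem _ fun j _ => ?_
    by_cases h : α j ≤ γ
    · exact Ideal.mul_mem_left _ _ (Ideal.subset_span ⟨j, h, rfl⟩)
    · rw [hA2 j h, zero_mul]; exact Ideal.zero_mem _
  · exact ⟨A, hA1, hA2⟩
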